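/- For every positive integer n, exactly one of the following holds for the triple (r_{3,0}(n), r_{3,1}(n), r_{3,2}(n)): all three are equal, or two are equal and the third differs from them by exactly 1. -/

import Mathlib

/-- The Fibonacci numbers `f₁ = 1, f₂ = 2, fᵢ = fᵢ₋₁ + fᵢ₋₂` (value at `0` is junk). -/
def fibW : ℕ → ℕ
  | 0 => 0
  | 1 => 1
  | 2 => 2
  | (n + 3) => fibW (n + 2) + fibW (n + 1)

theorem fibW_add (n : ℕ) : fibW (n+3) = fibW (n+2) + fibW (n+1) := rfl

theorem fibW_pos : ∀ c, 1 ≤ c → 0 < fibW c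
  | 1, _ => by norm_num [fibW]
  | 2, _ => by norm_num [fibW]
  | (n+3), _ => by
      have := fibW_pos (n+2) (by omega)
      rw [fibW_add]; omega

theorem fibW_lt_succ : ∀ c, 1 ≤ c → fibW c < fibW (c+1)
  | 1, _ => by norm_num [fibW]
  | (n+2), _ => by
      have := fibW_pos (n+1) (by omega)
      rw [show n+2+1 = n+3 from rfl, fibW_add]; omega

theorem fibW_mono {a b : ℕ} (ha : 1 ≤ a) (h : a ≤ b) : fibW a ≤ fibW b := by
  induction b, h using Nat.le_induction with
  | base => rfl
  | succ m hm ih => exact le_trans ih (le_of_lt (fibW_lt_succ m (le_trans ha hm)))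

theorem fibW_strict {a b : ℕ} (ha : 1 ≤ a) (h : a < b) : fibW a < fibW b :=
  lt_of_lt_of_le (fibW_lt_succ a ha) (fibW_mono (by omega) h)

theorem le_fibW : ∀ c, c ≤ fibW c
  | 0 => by norm_num [fibW]
  | 1 => by norm_num [fibW]
  | 2 => by norm_num [fibW]
  | (n+3) => by
      have h1 := le_fibW (n+2)
      have h2 := fibW_pos (n+1) (by omega)
      rw [fibW_add]; omega

theorem sum_fibW : ∀ m, (∑ j ∈ Finset.Icc 1 m, fibW j) + 2 = fibW (m+2)
  | 0 => by norm_num [fibW, show Finset.Icc 1 0 = ∅ from Finset.Icc_eq_empty (by omega)]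
  | (m+1) => by
      have ih := sum_fibW m
      have : Finset.Icc 1 (m+1) = insert (m+1) (Finset.Icc 1 m) := by
        ext j; simp [Finset.mem_Icc, Finset.mem_insert]; omega
      rw [this, Finset.sum_insert (by simp [Finset.mem_Icc])]
      rw [show m+1+2 = m+3 from rfl, fibW_add]; omega

/-- count of subsets of Icc 1 m with fibW-sum n and card ≡ i mod 3 -/
def F (m n i : ℕ) : ℕ :=
  (((Finset.Icc 1 m).powerset.filter
      (fun S => (∑ j ∈ S, fibW j) = n ∧ S.card % 3 = i)).card)

theorem F_rec (m n i : ℕ) (hi : i < 3) :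
    F (m+1) n i = F m n i +
      (if fibW (m+1) ≤ n then F m (n - fibW (m+1)) ((i+2)%3) else 0) := by
  classical
  have hins : Finset.Icc 1 (m+1) = insert (m+1) (Finset.Icc 1 m) := by
    ext j; simp [Finset.mem_Icc, Finset.mem_insert]; omega
  have hnot : (m+1) ∉ Finset.Icc 1 m := by simp [Finset.mem_Icc]
  rw [F, hins, Finset.powerset_insert, Finset.filter_union,
    Finset.card_union_of_disjoint]
  · congr 1
    · -- card of filtered image
      rw [Finset.filter_image]
      rw [Finset.card_image_of_injOn]
      · -- now a filter over powerset with composed predicate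
        by_cases hle : fibW (m+1) ≤ n
        · simp only [if_pos hle]
          rw [F]
          congr 1
          apply Finset.filter_congr
          intro S hS
          simp only [Finset.mem_powerset] at hS
          have hmem : (m+1) ∉ S := fun h => hnot (hS h)
          simp only [Function.comp_apply, Finset.sum_insert hmem,
            Finset.card_insert_of_notMem hmem]
          constructor
          · rintro ⟨h1, h2⟩
            constructor
            · omega
            · omega
          · rintro ⟨h1, h2⟩
            constructor
            · omega
            · omega
        · simp only [if_neg hle]
          rw [Finset.card_eq_zero, Finset.filter_eq_empty_iff]
          intro S hS
          simp only [Finset.mem_powerset] at hS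
          have hmem : (m+1) ∉ S := fun h => hnot (hS h)
          simp only [Function.comp_apply, Finset.sum_insert hmem]
          intro h
          omega
      · intro S hS T hT hST
        simp only [Finset.coe_filter, Set.mem_setOf_eq, Finset.mem_powerset] at hS hT
        have h1 : (m+1) ∉ S := fun h => hnot (hS.1 h)
        have h2 : (m+1) ∉ T := fun h => hnot (hT.1 h)
        have := congrArg (fun X => Finset.erase X (m+1)) hST
        simpa [Finset.erase_insert h1, Finset.erase_insert h2] using this
  · -- disjoint
    apply Finset.disjoint_filter_filter
    rw [Finset.disjoint_left]
    intro S hS hS'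
    simp only [Finset.mem_powerset] at hS
    simp only [Finset.mem_image, Finset.mem_powerset] at hS'
    obtain ⟨T, _, rfl⟩ := hS'
    exact hnot (hS (Finset.mem_insert_self _ _))

abbrev Zw := ℤ × ℤ

def wm (p : Zw) : Zw := (-p.2, p.1 - p.2)

def z (m n : ℕ) : Zw := ((F m n 0 : ℤ) - F m n 2, (F m n 1 : ℤ) - F m n 2)

theorem z_rec (m n : ℕ) :
    z (m+1) n = z m n + (if fibW (m+1) ≤ n then wm (z m (n - fibW (m+1))) else 0) := by
  by_cases h : fibW (m+1) ≤ n
  · simp only [if_pos h, z, wm]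
    have h0 := F_rec m n 0 (by norm_num)
    have h1 := F_rec m n 1 (by norm_num)
    have h2 := F_rec m n 2 (by norm_num)
    rw [if_pos h] at h0 h1 h2
    norm_num at h0 h1 h2
    ext <;> simp [h0, h1, h2] <;> push_cast <;> ring
  · simp only [if_neg h, z]
    have h0 := F_rec m n 0 (by norm_num)
    have h1 := F_rec m n 1 (by norm_num)
    have h2 := F_rec m n 2 (by norm_num)
    rw [if_neg h] at h0 h1 h2
    ext <;> simp [h0, h1, h2]

theorem F_big {m n i : ℕ} (h : fibW (m+2) ≤ n + 1) (hn : 1 ≤ n) : F m n i = 0 := by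
  rw [F, Finset.card_eq_zero, Finset.filter_eq_empty_iff]
  intro S hS
  simp only [Finset.mem_powerset] at hS
  intro hcon
  have hsum : (∑ j ∈ S, fibW j) ≤ ∑ j ∈ Finset.Icc 1 m, fibW j :=
    Finset.sum_le_sum_of_subset hS
  have := sum_fibW m
  omega

theorem z_big {m n : ℕ} (h : fibW (m+2) ≤ n + 1) (hn : 1 ≤ n) : z m n = 0 := by
  simp [z, F_big h hn, Prod.ext_iff]

theorem z_zero_right (m : ℕ) : z m 0 = (1, 0) := by
  have : ∀ i, F m 0 i = if i = 0 then 1 else 0 := by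
    intro i
    rw [F]
    have : ((Finset.Icc 1 m).powerset.filter
        (fun S => (∑ j ∈ S, fibW j) = 0 ∧ S.card % 3 = i)) =
        if i = 0 then {∅} else ∅ := by
      split
      · next hi =>
        subst hi
        ext S
        simp only [Finset.mem_filter, Finset.mem_powerset, Finset.mem_singleton]
        constructor
        · rintro ⟨hsub, hsum, hcard⟩
          by_contra hne
          obtain ⟨x, hx⟩ := Finset.nonempty_iff_ne_empty.2 hne
          have h1x : 1 ≤ x := (Finset.mem_Icc.1 (hsub hx)).1
          have : 0 < fibW x := fibW_pos x h1x
          have : fibW x ≤ ∑ j ∈ S, fibW j := Finset.single_le_sum (fun _ _ => Nat.zero_le _) hx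
          omega
        · rintro rfl
          simp
      · next hi =>
        ext S
        simp only [Finset.mem_filter, Finset.mem_powerset, Finset.notMem_empty, iff_false]
        rintro ⟨hsub, hsum, hcard⟩
        apply hi
        have : S = ∅ := by
          by_contra hne
          obtain ⟨x, hx⟩ := Finset.nonempty_iff_ne_empty.2 hne
          have h1x : 1 ≤ x := (Finset.mem_Icc.1 (hsub hx)).1
          have : 0 < fibW x := fibW_pos x h1x
          have : fibW x ≤ ∑ j ∈ S, fibW j := Finset.single_le_sum (fun _ _ => Nat.zero_le _) hx
          omega
        subst this
        simpa using hcard.symm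
    rw [this]
    split <;> simp
  simp [z, this]

theorem z_zero_left {n : ℕ} (hn : 1 ≤ n) : z 0 n = 0 := by
  have : ∀ i, F 0 n i = 0 := by
    intro i
    rw [F, Finset.card_eq_zero, Finset.filter_eq_empty_iff]
    intro S hS
    simp only [Finset.mem_powerset] at hS
    have : S = ∅ := by
      have : Finset.Icc 1 0 = ∅ := Finset.Icc_eq_empty (by omega)
      rw [this] at hS
      exact Finset.subset_empty.1 hS
    subst this
    simp
    omega
  simp [z, this, Prod.ext_iff]

theorem z_stable {c m n : ℕ} (hc : 1 ≤ c) (hcm : c ≤ m) (hn : n < fibW (c+1)) :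
    z m n = z c n := by
  induction m, hcm using Nat.le_induction with
  | base => rfl
  | succ k hk ih =>
      rw [z_rec, if_neg, ih, add_zero]
      intro hcon
      have : fibW (c+1) ≤ fibW (k+1) := fibW_mono (by omega) (by omega)
      omega

def chain (A B : Zw) : ℕ → Zw
  | 0 => wm B
  | 1 => wm A
  | (j+2) => wm A + wm (chain A B j)

def goodList : List (Zw × Zw) :=
  [((-1,-1),(-1,-1)), ((-1,-1),(0,-1)), ((-1,-1),(0,0)), ((-1,0),(-1,-1)),
   ((-1,0),(-1,0)), ((-1,0),(0,0)), ((0,-1),(0,-1)), ((0,-1),(0,0)),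
   ((0,-1),(1,0)), ((0,0),(-1,-1)), ((0,0),(-1,0)), ((0,0),(0,-1)),
   ((0,0),(0,0)), ((0,0),(0,1)), ((0,0),(1,0)), ((0,0),(1,1)),
   ((0,1),(-1,0)), ((0,1),(0,0)), ((0,1),(0,1)), ((1,0),(0,0)),
   ((1,0),(1,0)), ((1,0),(1,1)), ((1,1),(0,0)), ((1,1),(0,1)),
   ((1,1),(1,1))]

def Good (A B : Zw) : Prop := (A, B) ∈ goodList

theorem chain_period (A B : Zw) : ∀ j, chain A B (j+6) = chain A B j := by
  have h6 : chain A B 6 = chain A B 0 := by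
    obtain ⟨a1, a2⟩ := A; obtain ⟨b1, b2⟩ := B
    show chain _ _ (4+2) = _
    rw [chain]
    show wm _ + wm (chain _ _ (2+2)) = _
    rw [chain]
    show _ + wm (wm _ + wm (chain _ _ (0+2))) = _
    rw [chain]
    simp only [chain, wm, Prod.mk_add_mk, Prod.ext_iff]
    constructor <;> ring
  have h7 : chain A B 7 = chain A B 1 := by
    obtain ⟨a1, a2⟩ := A; obtain ⟨b1, b2⟩ := B
    show chain _ _ (5+2) = _
    rw [chain]
    show wm _ + wm (chain _ _ (3+2)) = _
    rw [chain]
    show _ + wm (wm _ + wm (chain _ _ (1+2))) = _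
    rw [chain]
    simp only [chain, wm, Prod.mk_add_mk, Prod.ext_iff]
    constructor <;> ring
  intro j
  induction j using Nat.strong_induction_on with
  | _ j ih =>
    match j with
    | 0 => exact h6
    | 1 => exact h7
    | (k+2) =>
      have := ih k (by omega)
      show chain A B ((k+6)+2) = chain A B (k+2)
      conv_rhs => rw [chain]
      rw [chain, this]

theorem closure_check :
    ∀ s ∈ (((1,0),(0,0)) :: goodList), ∀ g ∈ [2,3,4,5,6,7],
      (chain s.1 s.2 g, wm (chain s.1 s.2 (g-2))) ∈ goodList := by decide

theorem step_good {A B : Zw} (h : (A, B) ∈ (((1,0),(0,0)) :: goodList)) :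
    ∀ g, 2 ≤ g → Good (chain A B g) (wm (chain A B (g-2))) := by
  intro g
  induction g using Nat.strong_induction_on with
  | _ g ih =>
    intro hg
    by_cases hg7 : g ≤ 7
    · have : g ∈ [2,3,4,5,6,7] := by interval_cases g <;> simp
      exact closure_check (A, B) h g this
    · have hge : 8 ≤ g := by omega
      have e1 : chain A B g = chain A B (g-6) := by
        have := chain_period A B (g-6)
        rwa [show g-6+6 = g by omega] at this
      have e2 : chain A B (g-2) = chain A B (g-6-2) := by
        have := chain_period A B (g-8)
        rw [show g-8+6 = g-2 by omega] at this
        rwa [show g-6-2 = g-8 by omega]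
      rw [e1, e2]
      exact ih (g-6) (by omega) (by omega)

theorem fibW_succ_le_two : ∀ c, 1 ≤ c → fibW (c+1) ≤ 2 * fibW c
  | 1, _ => by norm_num [fibW]
  | (n+2), _ => by
      have h := fibW_mono (a := n+1) (b := n+2) (by omega) (by omega)
      rw [show n+2+1 = n+3 from rfl, fibW_add]; omega

theorem cascade {u cu : ℕ} (hcu : 1 ≤ cu) (hfu : fibW cu ≤ u) (hu : u < fibW (cu+1)) :
    ∀ j, z (cu + j) (u + fibW (cu + j)) = chain (z cu u) (z (cu-1) u) j := by
  have hu1 : 1 ≤ u := le_trans (fibW_pos cu hcu) hfu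
  intro j
  induction j using Nat.strong_induction_on with
  | _ j ih =>
    match j with
    | 0 =>
      obtain ⟨k, rfl⟩ : ∃ k, cu = k + 1 := ⟨cu - 1, by omega⟩
      rw [Nat.add_zero, z_rec, if_pos (by omega)]
      have h1 : z k (u + fibW (k+1)) = 0 := by
        apply z_big _ (by omega)
        have := fibW_succ_le_two (k+1) (by omega)
        simp only [show k+1+1 = k+2 from rfl] at this
        omega
      rw [h1, Nat.add_sub_cancel, zero_add]
      simp [chain]
    | 1 =>
      rw [z_rec, if_pos (by omega)]
      have h1 : z cu (u + fibW (cu+1)) = 0 := by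
        apply z_big _ (by omega)
        have : fibW (cu+2) = fibW (cu+1) + fibW cu := by
          have := fibW_add (cu-1)
          rw [show cu-1+3 = cu+2 by omega, show cu-1+2 = cu+1 by omega,
            show cu-1+1 = cu by omega] at this
          exact this
        omega
      rw [h1, Nat.add_sub_cancel, zero_add]
      simp [chain]
    | (j+2) =>
      have hl3 : 3 ≤ cu + (j+2) := by omega
      set l := cu + (j + 2) with hl
      have hidl : fibW l = fibW (l-1) + fibW (l-2) := by
        have := fibW_add (l-3)
        rw [show l-3+3 = l by omega, show l-3+2 = l-1 by omega,
          show l-3+1 = l-2 by omega] at this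
        exact this
      have e1 : z (l-1) u = z cu u := z_stable hcu (by omega) hu
      have e2 : z (l-1) (u + fibW l) = wm (z (l-2) (u + fibW (l-2))) := by
        obtain ⟨k, hk⟩ : ∃ k, l - 1 = k + 1 := ⟨l - 2, by omega⟩
        rw [hk, z_rec, if_pos]
        · have h0 : z k (u + fibW l) = 0 := by
            apply z_big _ (by omega)
            have : k + 2 = l := by omega
            rw [this]; omega
          have harg : u + fibW l - fibW (k+1) = u + fibW (l-2) := by
            have : k + 1 = l - 1 := by omega
            rw [this]; omega
          rw [h0, harg, zero_add, show k = l - 2 by omega]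
        · have : fibW (k+1) ≤ fibW l := fibW_mono (by omega) (by omega)
          omega
      have e3 : z (l-2) (u + fibW (l-2)) = chain (z cu u) (z (cu-1) u) j := by
        have : l - 2 = cu + j := by omega
        rw [this]
        exact ih j (by omega)
      obtain ⟨k, hk⟩ : ∃ k, l = k + 1 := ⟨l - 1, by omega⟩
      rw [hk, z_rec, if_pos (by omega)]
      rw [Nat.add_sub_cancel, show k = l - 1 by omega, show l-1+1 = l by omega, e1, e2, e3]
      show wm (chain _ _ j) + wm (z cu u) = chain _ _ (j+2)
      rw [chain]
      exact add_comm _ _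

theorem Ychain : ∀ l, 1 ≤ l → z l (fibW l) = chain (1,0) (0,0) l := by
  intro l
  induction l using Nat.strong_induction_on with
  | _ l ih =>
    intro hl
    match l, hl with
    | 1, _ => show z 1 1 = _; simp only [chain, wm]; norm_num [z]; decide
    | 2, _ => show z 2 2 = _; simp only [chain, wm]; norm_num [z]; decide
    | (m+3), _ =>
      have hid : fibW (m+3) = fibW (m+2) + fibW (m+1) := fibW_add m
      rw [z_rec, if_pos (le_refl _), Nat.sub_self, z_zero_right]
      have e1 : z (m+2) (fibW (m+3)) = wm (z (m+1) (fibW (m+1))) := by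
        have hmono : fibW (m+2) ≤ fibW (m+3) := by omega
        rw [show m+2 = (m+1)+1 from rfl, z_rec, if_pos (by simpa using hmono)]
        have h0 : z (m+1) (fibW (m+3)) = 0 := by
          apply z_big _ (fibW_pos (m+3) (by omega))
          simp only [show m+1+2 = m+3 from rfl]
          omega
        have harg : fibW (m+3) - fibW (m+1+1) = fibW (m+1) := by
          simp only [show m+1+1 = m+2 from rfl]; omega
        rw [h0, harg, zero_add]
      rw [e1, ih (m+1) (by omega) (by omega)]
      show wm (chain _ _ (m+1)) + wm (1,0) = chain _ _ (m+1+2)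
      rw [chain]
      exact add_comm _ _

theorem exists_top : ∀ n, 1 ≤ n → ∃ c, 1 ≤ c ∧ fibW c ≤ n ∧ n < fibW (c+1) := by
  intro n hn
  induction n, hn using Nat.le_induction with
  | base => exact ⟨1, by norm_num [fibW]⟩
  | succ m hm ih =>
    obtain ⟨c, hc1, hc2, hc3⟩ := ih
    by_cases h : m + 1 < fibW (c+1)
    · exact ⟨c, hc1, by omega, h⟩
    · refine ⟨c+1, by omega, by omega, ?_⟩
      have := fibW_lt_succ (c+1) (by omega)
      omega

theorem main_good : ∀ n, 1 ≤ n → ∃ c, 1 ≤ c ∧ fibW c ≤ n ∧ n < fibW (c+1) ∧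
    Good (z c n) (z (c-1) n) := by
  intro n
  induction n using Nat.strong_induction_on with
  | _ n ih =>
    intro hn
    obtain ⟨c, hc1, hc2, hc3⟩ := exists_top n hn
    refine ⟨c, hc1, hc2, hc3, ?_⟩
    by_cases hu : n = fibW c
    · -- single digit case
      subst hu
      match c, hc1 with
      | 1, _ => exact (by decide : (z 1 (fibW 1), z (1-1) (fibW 1)) ∈ goodList)
      | 2, _ => exact (by decide : (z 2 (fibW 2), z (2-1) (fibW 2)) ∈ goodList)
      | (m+3), _ =>
        have hA : z (m+3) (fibW (m+3)) = chain (1,0) (0,0) (m+3) := Ychain (m+3) (by omega)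
        have hB : z (m+3-1) (fibW (m+3)) = wm (chain (1,0) (0,0) (m+1)) := by
          show z ((m+1)+1) (fibW (m+3)) = _
          rw [z_rec, if_pos (by
            have : fibW (m+2) ≤ fibW (m+3) := fibW_mono (by omega) (by omega)
            simpa using this)]
          have h0 : z (m+1) (fibW (m+3)) = 0 := by
            apply z_big _ (fibW_pos (m+3) (by omega))
            simp only [show m+1+2 = m+3 from rfl]
            omega
          have harg : fibW (m+3) - fibW (m+1+1) = fibW (m+1) := by
            simp only [show m+1+1 = m+2 from rfl]
            have := fibW_add m
            omega
          rw [h0, harg, zero_add, Ychain (m+1) (by omega)]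
        rw [hA, hB]
        have hst := step_good (A := (1,0)) (B := (0,0)) List.mem_cons_self (m+3) (by omega)
        rwa [show m+3-2 = m+1 by omega] at hst
    · -- composite case
      have hc3' : 3 ≤ c := by
        by_contra hcon
        interval_cases c
        · have e1 : fibW 1 = 1 := rfl
          have e2 : fibW (1+1) = 2 := rfl
          omega
        · have e1 : fibW 2 = 2 := rfl
          have e2 : fibW (2+1) = 3 := rfl
          omega
      set u := n - fibW c with hudef
      have hu1 : 1 ≤ u := by
        have := fibW_pos c hc1
        omega
      have hun : u < n := by
        have := fibW_pos c hc1
        omega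
      obtain ⟨cu, hcu1, hcu2, hcu3, hgood⟩ := ih u hun hu1
      have hidc : fibW (c+1) = fibW c + fibW (c-1) := by
        have := fibW_add (c-2)
        rw [show c-2+3 = c+1 by omega, show c-2+2 = c by omega,
          show c-2+1 = c-1 by omega] at this
        exact this
      have hucm : u < fibW (c-1) := by omega
      have hcuc : cu + 2 ≤ c := by
        by_contra hcon
        have : fibW (c-1) ≤ fibW cu := fibW_mono (by omega) (by omega)
        omega
      set g := c - cu with hgdef
      have hg2 : 2 ≤ g := by omega
      have hA : z c n = chain (z cu u) (z (cu-1) u) g := by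
        have := cascade hcu1 hcu2 hcu3 g
        rw [show cu + g = c by omega] at this
        rw [show n = u + fibW c by omega]
        exact this
      have hB : z (c-1) n = wm (chain (z cu u) (z (cu-1) u) (g-2)) := by
        obtain ⟨k, hk⟩ : ∃ k, c - 1 = k + 1 := ⟨c-2, by omega⟩
        rw [hk, z_rec, if_pos (by
          have : fibW (k+1) ≤ fibW c := fibW_mono (by omega) (by omega)
          omega)]
        have h0 : z k n = 0 := by
          apply z_big _ hn
          rw [show k + 2 = c by omega]
          omega
        have harg : n - fibW (k+1) = u + fibW (cu + (g-2)) := by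
          rw [show k+1 = c-1 by omega, show cu + (g-2) = c-2 by omega]
          have hidc2 : fibW c = fibW (c-1) + fibW (c-2) := by
            have := fibW_add (c-3)
            rw [show c-3+3 = c by omega, show c-3+2 = c-1 by omega,
              show c-3+1 = c-2 by omega] at this
            exact this
          omega
        rw [h0, harg, zero_add, show k = c - 2 by omega]
        rw [show c - 2 = cu + (g-2) by omega]
        rw [cascade hcu1 hcu2 hcu3 (g-2)]
      rw [hA, hB]
      exact step_good (List.mem_cons_of_mem _ hgood) g hg2

/-- `r d i n` is the number of partitions of `n` into distinct Fibonacci numbers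
`f_j` (`j ≥ 1`) whose number of parts is `≡ i (mod d)`. -/
noncomputable def r (d i n : ℕ) : ℕ :=
  Nat.card {S : Finset ℕ // (∀ j ∈ S, 1 ≤ j) ∧ (∑ j ∈ S, fibW j) = n ∧ S.card % d = i}

theorem r_eq (i n : ℕ) (hn : 1 ≤ n) : r 3 i n = F n n i := by
  rw [r, F]
  have key : ∀ S : Finset ℕ,
      ((∀ j ∈ S, 1 ≤ j) ∧ (∑ j ∈ S, fibW j) = n ∧ S.card % 3 = i) ↔
      S ∈ (Finset.Icc 1 n).powerset.filter
        (fun S => (∑ j ∈ S, fibW j) = n ∧ S.card % 3 = i) := by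
    intro S
    simp only [Finset.mem_filter, Finset.mem_powerset]
    constructor
    · rintro ⟨h1, h2, h3⟩
      refine ⟨?_, h2, h3⟩
      intro j hj
      rw [Finset.mem_Icc]
      refine ⟨h1 j hj, ?_⟩
      have hle : fibW j ≤ ∑ k ∈ S, fibW k :=
        Finset.single_le_sum (fun _ _ => Nat.zero_le _) hj
      have := le_fibW j
      omega
    · rintro ⟨h1, h2, h3⟩
      exact ⟨fun j hj => (Finset.mem_Icc.1 (h1 hj)).1, h2, h3⟩
  rw [Nat.card_congr (Equiv.subtypeEquivRight key)]
  exact Nat.card_eq_finsetCard _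

theorem good_fst {A B : Zw} (h : Good A B) :
    A ∈ [((0,0) : Zw), (1,0), (-1,0), (0,1), (0,-1), (1,1), (-1,-1)] := by
  have h' : (A, B) ∈ goodList := h
  fin_cases h' <;> decide

theorem trichotomy (n : ℕ) (hn : 0 < n) :
    Xor'
      (r 3 0 n = r 3 1 n ∧ r 3 1 n = r 3 2 n)
      (((r 3 0 n : ℤ) = r 3 1 n ∧ |(r 3 2 n : ℤ) - r 3 0 n| = 1) ∨
       ((r 3 0 n : ℤ) = r 3 2 n ∧ |(r 3 1 n : ℤ) - r 3 0 n| = 1) ∨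
       ((r 3 1 n : ℤ) = r 3 2 n ∧ |(r 3 0 n : ℤ) - r 3 1 n| = 1)) := by
  obtain ⟨c, hc1, hc2, hc3, hgood⟩ := main_good n hn
  have hcn : c ≤ n := le_trans (le_fibW c) hc2
  have hzn : z n n = z c n := z_stable hc1 hcn hc3
  have h7 := good_fst hgood
  rw [← hzn] at h7
  have e0 : (r 3 0 n : ℤ) = F n n 0 := by rw [r_eq 0 n hn]
  have e1 : (r 3 1 n : ℤ) = F n n 1 := by rw [r_eq 1 n hn]
  have e2 : (r 3 2 n : ℤ) = F n n 2 := by rw [r_eq 2 n hn]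
  rw [show r 3 0 n = F n n 0 from r_eq 0 n hn, show r 3 1 n = F n n 1 from r_eq 1 n hn,
    show r 3 2 n = F n n 2 from r_eq 2 n hn]
  simp only [z, List.mem_cons, List.mem_singleton, Prod.mk.injEq, List.not_mem_nil,
    or_false] at h7
  simp only [Xor', Xor, abs_eq (by norm_num : (0:ℤ) ≤ 1)]
  rcases h7 with h | h | h | h | h | h | h <;> omega
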